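/- Let z, w ∈ ℂ with z ≠ 0, and let f, m̂ ∈ ℝ. Suppose (z,w) lies on the m̂-energy level of the hyperbolic Hooke problem in the Poincaré-disc chart: (1−|z|²)²|w|²/8 + 4f|z|²/(1+|z|²)² = m̂. Set q = z² and p = w/\bar{z}. Then (q,p) satisfies (1−|q|²)²|p|²/8 + 4f − m̂(1+|q|²)/|q| − 2m̂ = 0; i.e., (q,p) lies on the energy level −(4f − 2m̂) of the hyperbolic Kepler problem with mass m̂ in the Poincaré-disc chart. Thus the complex square mapping conformally transforms the hyperbolic Hooke problem into the hyperbolic Kepler problem on fixed energy levels. -/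

import Mathlib

noncomputable section

/-- The complex square mapping conformally transforms the hyperbolic Hooke
problem into the hyperbolic Kepler problem on fixed energy levels: a point of
the `m̂`-energy level of the hyperbolic Hooke problem in the Poincaré-disc chart
is sent by `(z,w) ↦ (z², w/z̄)` to a point of the `-(4f - 2m̂)`-energy level of
the hyperbolic Kepler problem in the Poincaré-disc chart. -/
theorem complex_square_hyperbolic_hooke_to_hyperbolic_kepler
    (z w : ℂ) (hz : z ≠ 0) (f mhat : ℝ)
    (h : (1 - ‖z‖ ^ 2) ^ 2 * ‖w‖ ^ 2 / 8
        + 4 * f * ‖z‖ ^ 2 / (1 + ‖z‖ ^ 2) ^ 2 = mhat)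
    (q p : ℂ) (hq : q = z ^ 2) (hp : p = w / (starRingEnd ℂ z)) :
    (1 - ‖q‖ ^ 2) ^ 2 * ‖p‖ ^ 2 / 8 + 4 * f
        - mhat * (1 + ‖q‖ ^ 2) / ‖q‖ - 2 * mhat = 0 := by
  have hr : ‖z‖ ≠ 0 := by simpa using hz
  have hq' : ‖q‖ = ‖z‖ ^ 2 := by rw [hq, norm_pow]
  have hp' : ‖p‖ = ‖w‖ / ‖z‖ := by
    rw [hp, norm_div, Complex.norm_conj]
  rw [hq', hp']
  set r := ‖z‖
  have h1 : (1 + r ^ 2) ^ 2 ≠ 0 := by positivity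
  field_simp at h ⊢
  nlinarith [h, sq_nonneg r, sq_nonneg (r * ‖w‖)]
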